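/- For every integer k ≥ 2, there exist n ∈ ℕ and a function f : ℝ^n → ℝ such that f can be computed by a ReLU neural network with k hidden layers but f is not a linear combination of maxima of at most 2^k affine functions; that is, ReLU(k) is a strict superset of MAX(2^k). Concretely, for n = 2^k the function f(x) = max{0, x_1, …, x_{n-3}, max{x_{n-2}, x_{n-1}} + max{0, x_n}} lies in ReLU_n(k) ∖ MAX_n(2^k). -/

import Mathlib

open Finset

/-- Componentwise ReLU. -/
noncomputable def relu {m : ℕ} (x : Fin m → ℝ) : Fin m → ℝ := fun i => max 0 (x i)

/-- `T` is an affine map given by a matrix and a bias vector. -/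
def IsAffineMap {n m : ℕ} (T : (Fin n → ℝ) → (Fin m → ℝ)) : Prop :=
  ∃ (A : Matrix (Fin m) (Fin n) ℝ) (b : Fin m → ℝ), ∀ x, T x = A.mulVec x + b

/-- `IsStack k n m g` : `g = σ ∘ T⁽ᵏ⁾ ∘ σ ∘ ⋯ ∘ σ ∘ T⁽¹⁾` for affine maps `T⁽ˡ⁾`,
with input dimension `n` and output dimension `m`. -/
inductive IsStack : (k n m : ℕ) → ((Fin n → ℝ) → (Fin m → ℝ)) → Prop where
  | base (n : ℕ) : IsStack 0 n n id
  | step {k n m' m : ℕ} {h : (Fin n → ℝ) → (Fin m' → ℝ)}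
      (T : (Fin m' → ℝ) → (Fin m → ℝ)) (hT : IsAffineMap T) (hh : IsStack k n m' h) :
      IsStack (k + 1) n m (relu ∘ T ∘ h)

/-- `f ∈ ReLU_n(k)`: `f` is computed by a ReLU neural network with `k` hidden layers and
input dimension `n` (the last layer is a linear map, without bias). -/
def InReLU (n k : ℕ) (f : (Fin n → ℝ) → ℝ) : Prop :=
  ∃ (m : ℕ) (g : (Fin n → ℝ) → (Fin m → ℝ)) (c : Fin m → ℝ),
    IsStack k n m g ∧ ∀ x, f x = ∑ i, c i * g x i

/-- Maximum of `v` over a finite set `S` (junk value `0` if `S = ∅`). -/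
noncomputable def finMaxOn {ι : Type*} (S : Finset ι) (v : ι → ℝ) : ℝ :=
  if h : S.Nonempty then S.sup' h v else 0

/-- `f ∈ MAX_n(p)`: `f` is a finite linear combination of maxima of (at most) `p`
affine functions. -/
def InMAX (n p : ℕ) (f : (Fin n → ℝ) → ℝ) : Prop :=
  ∃ (N : ℕ) (lam : Fin N → ℝ) (a : Fin N → Fin p → Fin n → ℝ) (b : Fin N → Fin p → ℝ),
    ∀ x, f x = ∑ j, lam j * finMaxOn Finset.univ (fun i => (∑ t, a j i t * x t) + b j i)

/-! ### finMaxOn lemmas -/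

lemma le_finMaxOn {ι : Type*} {S : Finset ι} {v : ι → ℝ} {i : ι} (hi : i ∈ S) :
    v i ≤ finMaxOn S v := by
  have hS : S.Nonempty := ⟨i, hi⟩
  rw [finMaxOn, dif_pos hS]
  exact Finset.le_sup' v hi

lemma finMaxOn_le {ι : Type*} {S : Finset ι} {v : ι → ℝ} {a : ℝ} (h0 : (0:ℝ) ≤ a)
    (h : ∀ i ∈ S, v i ≤ a) : finMaxOn S v ≤ a := by
  rw [finMaxOn]; split_ifs with hS
  · exact Finset.sup'_le hS v h
  · exact h0

lemma finMaxOn_congr {ι : Type*} {S : Finset ι} {v w : ι → ℝ} (h : ∀ i ∈ S, v i = w i) :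
    finMaxOn S v = finMaxOn S w := by
  rw [finMaxOn, finMaxOn]; split_ifs with hS
  · exact Finset.sup'_congr hS rfl h
  · rfl

lemma finMaxOn_add_const {ι : Type*} {S : Finset ι} (hS : S.Nonempty) (v : ι → ℝ) (c : ℝ) :
    finMaxOn S (fun i => v i + c) = finMaxOn S v + c := by
  rw [finMaxOn, finMaxOn, dif_pos hS, dif_pos hS]
  apply le_antisymm
  · exact Finset.sup'_le hS _ (fun i hi => by
      have := Finset.le_sup' v hi; linarith)
  · have h2 : ∀ i ∈ S, v i ≤ S.sup' hS (fun i => v i + c) - c := fun i hi => by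
      have := Finset.le_sup' (fun i => v i + c) hi
      linarith
    have := Finset.sup'_le hS v h2
    linarith

/-! ### the auxiliary function f' -/

variable {n : ℕ}

noncomputable def fprime (n : ℕ) (hn : 4 ≤ n) (x : Fin n → ℝ) : ℝ :=
  max 0 (max
    (finMaxOn (Finset.univ.filter (fun i : Fin n => 0 < (i : ℕ) ∧ (i : ℕ) < n - 3)) (fun i => x i))
    (max (x ⟨n - 3, by omega⟩) (x ⟨n - 2, by omega⟩) + max 0 (x ⟨n - 1, by omega⟩)))

lemma fprime_nonneg (hn : 4 ≤ n) (x : Fin n → ℝ) : 0 ≤ fprime n hn x := le_max_left _ _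

lemma fprime_congr (hn : 4 ≤ n) {x y : Fin n → ℝ}
    (h : ∀ t : Fin n, (t : ℕ) ≠ 0 → x t = y t) : fprime n hn x = fprime n hn y := by
  unfold fprime
  rw [h ⟨n-3, by omega⟩ (by simp; omega), h ⟨n-2, by omega⟩ (by simp; omega),
      h ⟨n-1, by omega⟩ (by simp; omega),
      finMaxOn_congr (fun i hi => h i (by simp at hi; omega))]

lemma fprime_zero (hn : 4 ≤ n) : fprime n hn (fun _ => (0:ℝ)) = 0 := by
  unfold fprime
  have h1 : finMaxOn (Finset.univ.filter (fun i : Fin n => 0 < (i : ℕ) ∧ (i : ℕ) < n - 3))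
      (fun _ : Fin n => (0:ℝ)) = 0 := by
    apply le_antisymm (finMaxOn_le le_rfl (fun i _ => le_rfl))
    rw [finMaxOn]; split_ifs with hS
    · exact Finset.le_sup' (fun _ : Fin n => (0:ℝ)) hS.choose_spec
    · rfl
  simp [h1]

lemma piece_le_fprime (hn : 4 ≤ n) (x : Fin n → ℝ) (r : ℕ) (h1 : 1 ≤ r) (h2 : r ≤ n - 2) :
    x ⟨r, by omega⟩ ≤ fprime n hn x := by
  unfold fprime
  rcases lt_or_ge r (n-3) with h | h
  · have : x ⟨r, by omega⟩ ≤ finMaxOn (Finset.univ.filter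
        (fun i : Fin n => 0 < (i : ℕ) ∧ (i : ℕ) < n - 3)) (fun i => x i) :=
      le_finMaxOn (by simp; omega)
    exact le_trans this (le_trans (le_max_left _ _) (le_max_right _ _))
  · rcases Nat.eq_or_lt_of_le h with h' | h'
    · have : (⟨r, by omega⟩ : Fin n) = ⟨n-3, by omega⟩ := by simp [Fin.ext_iff]; omega
      rw [this]
      have : x ⟨n-3, by omega⟩ ≤ max (x ⟨n - 3, by omega⟩) (x ⟨n - 2, by omega⟩)
          + max 0 (x ⟨n - 1, by omega⟩) := by
        have := le_max_left (x (⟨n-3, by omega⟩ : Fin n)) (x ⟨n - 2, by omega⟩)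
        have h0 : (0:ℝ) ≤ max 0 (x ⟨n - 1, by omega⟩) := le_max_left _ _
        linarith
      exact le_trans this (le_trans (le_max_right _ _) (le_max_right _ _))
    · have hr : r = n - 2 := by omega
      have heq : (⟨r, by omega⟩ : Fin n) = ⟨n-2, by omega⟩ := by simp [Fin.ext_iff]; omega
      rw [heq]
      have : x ⟨n-2, by omega⟩ ≤ max (x ⟨n - 3, by omega⟩) (x ⟨n - 2, by omega⟩)
          + max 0 (x ⟨n - 1, by omega⟩) := by
        have := le_max_right (x (⟨n-3, by omega⟩ : Fin n)) (x ⟨n - 2, by omega⟩)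
        have h0 : (0:ℝ) ≤ max 0 (x ⟨n - 1, by omega⟩) := le_max_left _ _
        linarith
      exact le_trans this (le_trans (le_max_right _ _) (le_max_right _ _))

lemma piece2_le_fprime (hn : 4 ≤ n) (x : Fin n → ℝ) (r : ℕ) (hr : r = n - 3 ∨ r = n - 2) :
    x ⟨r, by omega⟩ + x ⟨n-1, by omega⟩ ≤ fprime n hn x := by
  unfold fprime
  have hb : x ⟨r, by omega⟩ ≤ max (x ⟨n - 3, by omega⟩) (x ⟨n - 2, by omega⟩) := by
    rcases hr with h | h
    · have : (⟨r, by omega⟩ : Fin n) = ⟨n-3, by omega⟩ := by simp [Fin.ext_iff]; omega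
      rw [this]; exact le_max_left _ _
    · have : (⟨r, by omega⟩ : Fin n) = ⟨n-2, by omega⟩ := by simp [Fin.ext_iff]; omega
      rw [this]; exact le_max_right _ _
  have hc : x ⟨n-1, by omega⟩ ≤ max 0 (x ⟨n - 1, by omega⟩) := le_max_right _ _
  have : x ⟨r, by omega⟩ + x ⟨n-1, by omega⟩ ≤ max (x ⟨n - 3, by omega⟩) (x ⟨n - 2, by omega⟩)
      + max 0 (x ⟨n - 1, by omega⟩) := by linarith
  exact le_trans this (le_trans (le_max_right _ _) (le_max_right _ _))

/-- `f(x) = max(x₀, f'(x))`. -/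
lemma feq (hn : 4 ≤ n) (f : (Fin n → ℝ) → ℝ)
    (hf : ∀ x, f x =
      max 0 (max
        (finMaxOn (Finset.univ.filter (fun i : Fin n => (i : ℕ) < n - 3)) (fun i => x i))
        (max (x ⟨n - 3, by omega⟩) (x ⟨n - 2, by omega⟩) + max 0 (x ⟨n - 1, by omega⟩))))
    (x : Fin n → ℝ) : f x = max (x ⟨0, by omega⟩) (fprime n hn x) := by
  rw [hf]
  set B := max (x ⟨n - 3, by omega⟩) (x ⟨n - 2, by omega⟩) + max 0 (x ⟨n - 1, by omega⟩) with hB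
  set F := Finset.univ.filter (fun i : Fin n => (i : ℕ) < n - 3) with hF
  set F' := Finset.univ.filter (fun i : Fin n => 0 < (i : ℕ) ∧ (i : ℕ) < n - 3) with hF'
  have hzF : (⟨0, by omega⟩ : Fin n) ∈ F := by simp [hF]; omega
  have hBle : B ≤ max (x ⟨0, by omega⟩) (fprime n hn x) := by
    refine le_trans ?_ (le_max_right _ _)
    unfold fprime
    exact le_trans (le_max_right _ _) (le_max_right _ _)
  apply le_antisymm
  · apply max_le
    · exact le_trans (fprime_nonneg hn x) (le_max_right _ _)
    · apply max_le _ hBle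
      apply finMaxOn_le (le_trans (fprime_nonneg hn x) (le_max_right _ _))
      intro i hi
      rcases Nat.eq_zero_or_pos (i : ℕ) with h0 | h0
      · have : i = ⟨0, by omega⟩ := by simp [Fin.ext_iff, h0]
        rw [this]; exact le_max_left _ _
      · have hiF' : i ∈ F' := by simp [hF']; simp [hF] at hi; exact ⟨h0, hi⟩
        refine le_trans (le_finMaxOn hiF') (le_trans ?_ (le_max_right _ _))
        unfold fprime
        exact le_trans (le_max_left _ _) (le_max_right _ _)
  · apply max_le
    · exact le_trans (le_finMaxOn hzF) (le_trans (le_max_left _ _) (le_max_right _ _))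
    · unfold fprime
      apply max_le (le_max_left _ _)
      apply max_le
      · apply finMaxOn_le (le_max_left _ _)
        intro i hi
        have hiF : i ∈ F := by simp [hF]; simp [hF'] at hi; omega
        exact le_trans (le_finMaxOn hiF) (le_trans (le_max_left _ _) (le_max_right _ _))
      · exact le_trans (le_max_right (finMaxOn F fun i => x i) B) (le_max_right 0 _)

/-! ### the linear functionals -/

noncomputable def slack (n : ℕ) (hn : 4 ≤ n) (r : Fin (n+1)) (x : Fin n → ℝ) : ℝ :=
  if (r : ℕ) = 0 then x ⟨0, by omega⟩
  else if (r : ℕ) ≤ n - 2 then x ⟨0, by omega⟩ - x ⟨min (r:ℕ) (n-1), by omega⟩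
  else if (r : ℕ) = n - 1 then x ⟨0, by omega⟩ - x ⟨n-3, by omega⟩ - x ⟨n-1, by omega⟩
  else x ⟨0, by omega⟩ - x ⟨n-2, by omega⟩ - x ⟨n-1, by omega⟩

lemma slack_add (hn : 4 ≤ n) (r : Fin (n+1)) (x y : Fin n → ℝ) :
    slack n hn r (x + y) = slack n hn r x + slack n hn r y := by
  unfold slack; split_ifs <;> simp [Pi.add_apply] <;> ring

lemma slack_smul (hn : 4 ≤ n) (r : Fin (n+1)) (c : ℝ) (x : Fin n → ℝ) :
    slack n hn r (fun t => c * x t) = c * slack n hn r x := by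
  unfold slack; split_ifs <;> ring

lemma slack_nonneg (hn : 4 ≤ n) (r : Fin (n+1)) (x : Fin n → ℝ)
    (hx : fprime n hn x ≤ x ⟨0, by omega⟩) : 0 ≤ slack n hn r x := by
  unfold slack
  split_ifs with h1 h2 h3
  · exact le_trans (fprime_nonneg hn x) hx
  · have hr1 : 1 ≤ (r:ℕ) := by omega
    have hr2 : (r:ℕ) ≤ n - 2 := h2
    have hmin : min (r:ℕ) (n-1) = (r:ℕ) := by omega
    have := piece_le_fprime hn x (r:ℕ) hr1 hr2
    have heq : (⟨min (r:ℕ) (n-1), by omega⟩ : Fin n) = ⟨(r:ℕ), by omega⟩ := by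
      simp [Fin.ext_iff]; omega
    rw [heq]; linarith
  · have := piece2_le_fprime hn x (n-3) (Or.inl rfl); linarith
  · have := piece2_le_fprime hn x (n-2) (Or.inr rfl); linarith

lemma slack_eq_zero_forall (hn : 4 ≤ n) (ν : Fin n → ℝ)
    (h : ∀ r : Fin (n+1), slack n hn r ν = 0) : ν = 0 := by
  have h0 : ν ⟨0, by omega⟩ = 0 := by have := h ⟨0, by omega⟩; simpa [slack] using this
  funext t
  rcases Nat.eq_zero_or_pos (t : ℕ) with ht | ht
  · have : t = ⟨0, by omega⟩ := by simp [Fin.ext_iff, ht]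
    rw [this]; exact h0
  rcases Nat.lt_or_ge (t : ℕ) (n-1) with ht2 | ht2
  · -- 1 ≤ t ≤ n-2 : use r = t
    have hr := h ⟨(t:ℕ), by omega⟩
    have hc1 : ¬((⟨(t:ℕ), by omega⟩ : Fin (n+1)) : ℕ) = 0 := by simp; omega
    have hc2 : ((⟨(t:ℕ), by omega⟩ : Fin (n+1)) : ℕ) ≤ n - 2 := by simp; omega
    rw [slack, if_neg hc1, if_pos hc2] at hr
    have heq : (⟨min ((⟨(t:ℕ), by omega⟩ : Fin (n+1)) : ℕ) (n-1), by omega⟩ : Fin n) = t := by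
      simp [Fin.ext_iff]; omega
    rw [heq] at hr
    simp [Pi.zero_apply]; linarith [h0]
  · -- t = n-1 : use r = n-1 together with r = n-3
    have htn : (t:ℕ) = n - 1 := by omega
    have h3 : ν ⟨n-3, by omega⟩ = 0 := by
      have hr := h ⟨n-3, by omega⟩
      have hc1 : ¬((⟨n-3, by omega⟩ : Fin (n+1)) : ℕ) = 0 := by simp; omega
      have hc2 : ((⟨n-3, by omega⟩ : Fin (n+1)) : ℕ) ≤ n - 2 := by simp; omega
      rw [slack, if_neg hc1, if_pos hc2] at hr
      have heq : (⟨min ((⟨n-3, by omega⟩ : Fin (n+1)) : ℕ) (n-1), by omega⟩ : Fin n)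
          = ⟨n-3, by omega⟩ := by simp [Fin.ext_iff]; omega
      rw [heq] at hr; linarith [h0]
    have hr := h ⟨n-1, by omega⟩
    have hc1 : ¬((⟨n-1, by omega⟩ : Fin (n+1)) : ℕ) = 0 := by simp; omega
    have hc2 : ¬((⟨n-1, by omega⟩ : Fin (n+1)) : ℕ) ≤ n - 2 := by simp; omega
    have hc3 : ((⟨n-1, by omega⟩ : Fin (n+1)) : ℕ) = n - 1 := by simp
    rw [slack, if_neg hc1, if_neg hc2, if_pos hc3] at hr
    have heq : t = (⟨n-1, by omega⟩ : Fin n) := by simp [Fin.ext_iff]; omega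
    rw [heq]
    simp [Pi.zero_apply]; linarith [h0, h3]

noncomputable def Xi (n : ℕ) (hn : 4 ≤ n) (s : Fin (n+1) → ℝ) (x : Fin n → ℝ) : ℝ :=
  -∑ r, s r * slack n hn r x

lemma Xi_add_x (hn : 4 ≤ n) (s : Fin (n+1) → ℝ) (x y : Fin n → ℝ) :
    Xi n hn s (x + y) = Xi n hn s x + Xi n hn s y := by
  unfold Xi
  rw [← neg_add, ← Finset.sum_add_distrib]
  congr 1
  apply Finset.sum_congr rfl
  intro r _
  rw [slack_add hn r x y]; ring

lemma Xi_sum_x (hn : 4 ≤ n) (s : Fin (n+1) → ℝ) {α : Type*} (S : Finset α)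
    (w : α → Fin n → ℝ) :
    Xi n hn s (∑ j ∈ S, w j) = ∑ j ∈ S, Xi n hn s (w j) := by
  classical
  induction S using Finset.cons_induction with
  | empty =>
      simp [Xi, slack]
  | cons j S hj ih =>
      rw [Finset.sum_cons, Finset.sum_cons, Xi_add_x hn, ih]

lemma Xi_add_s (hn : 4 ≤ n) (s s' : Fin (n+1) → ℝ) (t : ℝ) (x : Fin n → ℝ) :
    Xi n hn (fun r => s r + t * s' r) x = Xi n hn s x + t * Xi n hn s' x := by
  unfold Xi
  have h : (∑ r, (s r + t * s' r) * slack n hn r x)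
      = (∑ r, s r * slack n hn r x) + t * ∑ r, s' r * slack n hn r x := by
    rw [Finset.mul_sum, ← Finset.sum_add_distrib]
    apply Finset.sum_congr rfl
    intro r _; ring
  rw [h]; ring

lemma Xi_smul_x (hn : 4 ≤ n) (s : Fin (n+1) → ℝ) (c : ℝ) (x : Fin n → ℝ) :
    Xi n hn s (fun t => c * x t) = c * Xi n hn s x := by
  unfold Xi
  rw [Finset.sum_congr rfl (fun r _ => by
    rw [slack_smul hn r c x]; ring : ∀ r ∈ Finset.univ,
      s r * slack n hn r (fun t => c * x t) = c * (s r * slack n hn r x)),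
    ← Finset.mul_sum]
  ring

lemma Xi_nonpos (hn : 4 ≤ n) (s : Fin (n+1) → ℝ) (hs : ∀ r, 0 ≤ s r) (x : Fin n → ℝ)
    (hx : fprime n hn x ≤ x ⟨0, by omega⟩) : Xi n hn s x ≤ 0 := by
  unfold Xi
  rw [neg_nonpos]
  exact Finset.sum_nonneg (fun r _ => mul_nonneg (hs r) (slack_nonneg hn r x hx))

lemma Xi_ne_zero_of_ne (hn : 4 ≤ n) (ν : Fin n → ℝ) (hν : ν ≠ 0) :
    ∃ r : Fin (n+1), Xi n hn (fun r' => if r' = r then 1 else 0) ν ≠ 0 := by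
  by_contra hcon
  push_neg at hcon
  apply hν
  apply slack_eq_zero_forall hn
  intro r
  have := hcon r
  unfold Xi at this
  rw [Finset.sum_congr rfl (fun r' _ => by
    rw [ite_mul, one_mul, zero_mul])] at this
  rw [Finset.sum_ite_eq' Finset.univ r (fun r' => slack n hn r' ν)] at this
  simpa using this

/-- generic positive parameters avoiding finitely many nonzero functionals -/
lemma exists_good_s (hn : 4 ≤ n) {N : ℕ} (ν : Fin N → Fin n → ℝ) (hν : ∀ j, ν j ≠ 0) :
    ∃ s : Fin (n+1) → ℝ, (∀ r, 0 < s r) ∧ ∀ j, Xi n hn s (ν j) ≠ 0 := by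
  classical
  suffices h : ∀ J : Finset (Fin N), ∃ s : Fin (n+1) → ℝ,
      (∀ r, 0 < s r) ∧ ∀ j ∈ J, Xi n hn s (ν j) ≠ 0 by
    obtain ⟨s, hs1, hs2⟩ := h Finset.univ
    exact ⟨s, hs1, fun j => hs2 j (Finset.mem_univ j)⟩
  intro J
  induction J using Finset.induction_on with
  | empty => exact ⟨fun _ => 1, fun _ => one_pos, fun j hj => absurd hj (Finset.notMem_empty j)⟩
  | @insert j J hjJ ih =>
      obtain ⟨s, hs1, hs2⟩ := ih
      by_cases hj : Xi n hn s (ν j) ≠ 0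
      · refine ⟨s, hs1, fun j' hj' => ?_⟩
        rcases Finset.mem_insert.mp hj' with h | h
        · rw [h]; exact hj
        · exact hs2 j' h
      push_neg at hj
      obtain ⟨r0, hr0⟩ := Xi_ne_zero_of_ne hn (ν j) (hν j)
      set s' : Fin (n+1) → ℝ := fun r' => if r' = r0 then 1 else 0 with hs'
      -- bad values of t
      set bad : Finset ℝ := (insert j J).image
        (fun j' => if Xi n hn s' (ν j') = 0 then (2:ℝ)
                   else -Xi n hn s (ν j') / Xi n hn s' (ν j')) with hbad
      have hinf : (Set.Ioo (0:ℝ) 1).Infinite := Set.infinite_coe_iff.mp (Set.Ioo.infinite one_pos)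
      obtain ⟨t, htI, htbad⟩ := hinf.exists_notMem_finset bad
      refine ⟨fun r => s r + t * s' r, ?_, ?_⟩
      · intro r
        show 0 < s r + t * s' r
        have h01 : (0:ℝ) < t := htI.1
        have hnn : (0:ℝ) ≤ t * s' r := by
          apply mul_nonneg h01.le
          simp only [hs']; split_ifs <;> norm_num
        linarith [hs1 r]
      · intro j' hj'
        rw [Xi_add_s hn s s' t (ν j')]
        by_cases hz : Xi n hn s' (ν j') = 0
        · rcases Finset.mem_insert.mp hj' with h | h
          · exfalso; rw [h] at hz; exact hr0 hz
          · rw [hz]; simpa using hs2 j' h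
        · intro hcon
          apply htbad
          rw [hbad]
          apply Finset.mem_image.mpr
          refine ⟨j', hj', ?_⟩
          rw [if_neg hz]
          field_simp
          linarith [hcon]

/-- Any `p ≤ n` points in `ℝⁿ` lie on an (affine) hyperplane. -/
lemma exists_normal (n p : ℕ) (hp : p ≤ n) (hp0 : 0 < p) (a : Fin p → Fin n → ℝ) :
    ∃ (ν : Fin n → ℝ) (c : ℝ), ν ≠ 0 ∧ ∀ i, (∑ t, a i t * ν t) = c := by
  classical
  let Φ : ((Fin n → ℝ) × ℝ) →ₗ[ℝ] (Fin p → ℝ) :=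
    { toFun := fun q => fun i => (∑ t, a i t * q.1 t) - q.2
      map_add' := by
        intro q q'
        funext i
        simp only [Pi.add_apply, Prod.fst_add, Prod.snd_add]
        rw [Finset.sum_congr rfl (fun t _ => mul_add (a i t) (q.1 t) (q'.1 t)),
          Finset.sum_add_distrib]
        ring
      map_smul' := by
        intro r q
        funext i
        simp only [Pi.smul_apply, Prod.smul_fst, Prod.smul_snd, smul_eq_mul, RingHom.id_apply]
        rw [show (∑ t, a i t * (r * q.1 t)) = r * (∑ t, a i t * q.1 t) from by
          rw [Finset.mul_sum]; exact Finset.sum_congr rfl (fun t _ => by ring)]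
        ring }
  have hne : LinearMap.ker Φ ≠ ⊥ := by
    intro hker
    have hinj : Function.Injective Φ := LinearMap.ker_eq_bot.mp hker
    have := LinearMap.finrank_le_finrank_of_injective hinj
    simp [Module.finrank_prod] at this
    omega
  obtain ⟨q, hq, hq0⟩ := Submodule.ne_bot_iff _ |>.mp hne
  have hqker : ∀ i, (∑ t, a i t * q.1 t) - q.2 = 0 := by
    intro i
    have : Φ q = 0 := hq
    exact congrFun this i
  refine ⟨q.1, q.2, ?_, fun i => by linarith [hqker i]⟩
  intro h1
  apply hq0
  have h2 : q.2 = 0 := by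
    have := hqker ⟨0, hp0⟩
    rw [h1] at this
    simpa using this
  exact Prod.ext h1 h2

lemma not_inMAX (k n : ℕ) (hk : 2 ≤ k) (hn : n = 2 ^ k)
    (f : (Fin n → ℝ) → ℝ)
    (hf : ∀ x, f x =
      max 0 (max
        (finMaxOn (Finset.univ.filter (fun i : Fin n => (i : ℕ) < n - 3)) (fun i => x i))
        (max (x ⟨n - 3, Nat.sub_lt (hn ▸ Nat.two_pow_pos k) (by norm_num)⟩)
             (x ⟨n - 2, Nat.sub_lt (hn ▸ Nat.two_pow_pos k) (by norm_num)⟩)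
          + max 0 (x ⟨n - 1, Nat.sub_lt (hn ▸ Nat.two_pow_pos k) (by norm_num)⟩)))) :
    ¬ InMAX n (2 ^ k) f := by
  classical
  have hn4 : 4 ≤ n := by
    have h1 : 2^2 ≤ 2^k := Nat.pow_le_pow_right (by norm_num) hk
    omega
  have hp0 : 0 < 2^k := Nat.two_pow_pos k
  intro hmax
  obtain ⟨N, lam, a, b, hrep⟩ := hmax
  -- normals
  have hnorm := fun j => exists_normal n (2^k) (le_of_eq hn.symm) hp0 (a j)
  choose ν cc hν hc using hnorm
  -- generic positive linear functional
  obtain ⟨s, hspos, hsne⟩ := exists_good_s hn4 ν hν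
  -- signed steps
  set sgn : Fin N → ℝ := fun j => if 0 < Xi n hn4 s (ν j) then 1 else -1 with hsgn
  set w : Fin N → Fin n → ℝ := fun j => fun t => sgn j * ν j t with hw
  have hXiw : ∀ j, 0 < Xi n hn4 s (w j) := by
    intro j
    have hlin : Xi n hn4 s (w j) = sgn j * Xi n hn4 s (ν j) := Xi_smul_x hn4 s (sgn j) (ν j)
    rw [hlin]
    by_cases ht : 0 < Xi n hn4 s (ν j)
    · have hh : sgn j = 1 := by simp [hsgn, ht]
      rw [hh]; linarith
    · have hh : sgn j = -1 := by simp [hsgn, ht]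
      have : Xi n hn4 s (ν j) < 0 := lt_of_le_of_ne (not_lt.mp ht) (hsne j)
      rw [hh]; nlinarith
  -- setup
  set z : Fin n := ⟨0, by omega⟩ with hz
  set xS : Finset (Fin N) → (Fin n → ℝ) := fun S => ∑ j ∈ S, w j with hxS
  have hgap : ∀ S : Finset (Fin N), S.Nonempty → xS S z < fprime n hn4 (xS S) := by
    intro S hS
    by_contra hcon
    push_neg at hcon
    have h1 : Xi n hn4 s (xS S) ≤ 0 := Xi_nonpos hn4 s (fun r => (hspos r).le) (xS S) hcon
    have h2 : 0 < Xi n hn4 s (xS S) := by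
      rw [hxS]
      simp only
      rw [Xi_sum_x hn4 s S w]
      exact Finset.sum_pos (fun j _ => hXiw j) hS
    linarith
  set T : Finset (Finset (Fin N)) := Finset.univ.powerset.erase ∅ with hT
  set gap : Finset (Fin N) → ℝ := fun S => fprime n hn4 (xS S) - xS S z with hgapdef
  set ε : ℝ := if hTne : T.Nonempty then min 1 (T.inf' hTne gap) else 1 with hε
  have hεpos : 0 < ε := by
    rw [hε]; split_ifs with hTne
    · apply lt_min one_pos
      rw [Finset.lt_inf'_iff]
      intro S hS
      have hSne : S.Nonempty := Finset.nonempty_iff_ne_empty.mpr (Finset.mem_erase.mp hS).1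
      have := hgap S hSne
      rw [hgapdef]; simp only; linarith
    · exact one_pos
  have hεle : ∀ S : Finset (Fin N), S ≠ ∅ → ε ≤ gap S := by
    intro S hS
    have hST : S ∈ T := Finset.mem_erase.mpr ⟨hS, Finset.mem_powerset.mpr (Finset.subset_univ S)⟩
    rw [hε, dif_pos ⟨S, hST⟩]
    exact le_trans (min_le_right _ _) (Finset.inf'_le gap hST)
  -- perturbation
  set pert : ℝ → (Fin n → ℝ) → (Fin n → ℝ) := fun e x => Function.update x z (x z + e) with hpert
  have hpz : ∀ e (x : Fin n → ℝ), pert e x z = x z + e := by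
    intro e x; rw [hpert]; simp
  have hpne : ∀ e (x : Fin n → ℝ) (t : Fin n), t ≠ z → pert e x t = x t := by
    intro e x t ht; rw [hpert]; simp only; rw [Function.update_of_ne ht]
  have hfp : ∀ e (x : Fin n → ℝ), fprime n hn4 (pert e x) = fprime n hn4 x := by
    intro e x
    apply fprime_congr hn4
    intro t ht
    apply hpne
    intro hteq
    apply ht
    rw [hteq]
  have hfeq := feq hn4 f hf
  have hfval : ∀ e (x : Fin n → ℝ), f (pert e x) = max (x z + e) (fprime n hn4 x) := by
    intro e x
    rw [hfeq (pert e x), hfp e x]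
    have hzz : (⟨0, by omega⟩ : Fin n) = z := rfl
    rw [hzz, hpz e x]
  have hfeqz : ∀ x : Fin n → ℝ, f x = max (x z) (fprime n hn4 x) := by
    intro x
    rw [hfeq x]
  -- the G functions
  set G : Fin N → (Fin n → ℝ) → ℝ :=
    fun j y => lam j * finMaxOn Finset.univ (fun i => (∑ t, a j i t * y t) + b j i) with hG
  have hrep' : ∀ x, f x = ∑ j, G j x := by
    intro x
    simp only [hG]
    exact hrep x
  have huniv_ne : (Finset.univ : Finset (Fin (2^k))).Nonempty := ⟨⟨0, hp0⟩, Finset.mem_univ _⟩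
  have hGshift : ∀ j (y : Fin n → ℝ),
      G j (fun t => w j t + y t) = G j y + lam j * (sgn j * cc j) := by
    intro j y
    simp only [hG]
    have hentry : ∀ i : Fin (2^k), (∑ t, a j i t * (w j t + y t)) + b j i
        = ((∑ t, a j i t * y t) + b j i) + sgn j * cc j := by
      intro i
      have hsum : (∑ t, a j i t * (w j t + y t))
          = (∑ t, a j i t * y t) + sgn j * (∑ t, a j i t * ν j t) := by
        rw [Finset.mul_sum, ← Finset.sum_add_distrib]
        apply Finset.sum_congr rfl
        intro t _
        rw [hw]
        ring
      rw [hsum, hc j i]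
      ring
    rw [finMaxOn_congr (fun i _ => hentry i), finMaxOn_add_const huniv_ne]
    ring
  have hpshift : ∀ e j (y : Fin n → ℝ),
      pert e (fun t => w j t + y t) = fun t => w j t + pert e y t := by
    intro e j y
    funext t
    by_cases htz : t = z
    · subst htz
      rw [hpz e (fun t => w j t + y t), hpz e y]
      ring
    · rw [hpne e _ t htz, hpne e y t htz]
  -- the alternating sum
  set Φ : (Fin n → ℝ) → ℝ := fun y => f (pert ε y) + f (pert (-ε) y) - 2 * f y with hΦ
  have hAε : ∑ S ∈ Finset.univ.powerset, (-1:ℝ)^S.card * Φ (xS S) = ε := by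
    rw [← Finset.add_sum_erase _ _ (Finset.mem_powerset.mpr (Finset.empty_subset _))]
    have hxS0 : xS ∅ = (fun _ => (0:ℝ)) := by
      rw [hxS]; simp only [Finset.sum_empty]; rfl
    have hterm0 : (-1:ℝ)^(∅ : Finset (Fin N)).card * Φ (xS ∅) = ε := by
      rw [hΦ]
      simp only [Finset.card_empty, pow_zero, one_mul, hxS0]
      rw [hfval ε (fun _ => 0), hfval (-ε) (fun _ => 0), hfeqz (fun _ => 0), fprime_zero hn4]
      rw [max_eq_right (by linarith : (0:ℝ) + -ε ≤ 0),
        max_eq_left (by linarith : (0:ℝ) ≤ 0 + ε),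
        max_eq_left (le_refl (0:ℝ))]
      ring
    rw [hterm0]
    have hrest : ∑ S ∈ (Finset.univ.powerset).erase ∅, (-1:ℝ)^S.card * Φ (xS S) = 0 := by
      apply Finset.sum_eq_zero
      intro S hS
      have hSne : S.Nonempty := Finset.nonempty_iff_ne_empty.mpr (Finset.mem_erase.mp hS).1
      have hy := hgap S hSne
      have hg := hεle S (Finset.mem_erase.mp hS).1
      rw [hgapdef] at hg
      simp only at hg
      rw [hΦ]
      simp only
      rw [hfval ε (xS S), hfval (-ε) (xS S), hfeqz (xS S)]
      rw [max_eq_right (by linarith : xS S z + ε ≤ fprime n hn4 (xS S)),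
        max_eq_right (by linarith : xS S z + -ε ≤ fprime n hn4 (xS S)),
        max_eq_right (by linarith : xS S z ≤ fprime n hn4 (xS S))]
      ring
    rw [hrest]
    ring
  have hinner : ∀ j : Fin N, (∑ S ∈ Finset.univ.powerset,
      (-1:ℝ)^S.card * (G j (pert ε (xS S)) + G j (pert (-ε) (xS S)) - 2 * G j (xS S))) = 0 := by
    intro j
    rw [← Finset.insert_erase (Finset.mem_univ j),
      Finset.sum_powerset_insert (Finset.notMem_erase j Finset.univ), ← Finset.sum_add_distrib]
    apply Finset.sum_eq_zero
    intro S hS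
    have hjS : j ∉ S := fun hj => (Finset.notMem_erase j Finset.univ) (Finset.mem_powerset.mp hS hj)
    have hxSi : xS (insert j S) = fun t => w j t + xS S t := by
      rw [hxS]
      simp only
      funext t
      rw [Finset.sum_insert hjS]
      simp [Pi.add_apply]
    have hcard : (insert j S).card = S.card + 1 := Finset.card_insert_of_notMem hjS
    have h1 : G j (pert ε (xS (insert j S)))
        = G j (pert ε (xS S)) + lam j * (sgn j * cc j) := by
      rw [hxSi, hpshift ε j (xS S)]
      exact hGshift j (pert ε (xS S))
    have h2 : G j (pert (-ε) (xS (insert j S)))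
        = G j (pert (-ε) (xS S)) + lam j * (sgn j * cc j) := by
      rw [hxSi, hpshift (-ε) j (xS S)]
      exact hGshift j (pert (-ε) (xS S))
    have h3 : G j (xS (insert j S)) = G j (xS S) + lam j * (sgn j * cc j) := by
      rw [hxSi]
      exact hGshift j (xS S)
    rw [h1, h2, h3, hcard, pow_succ]
    ring
  have hΦG : ∀ y : Fin n → ℝ,
      Φ y = ∑ j, (G j (pert ε y) + G j (pert (-ε) y) - 2 * G j y) := by
    intro y
    rw [hΦ]
    simp only
    rw [hrep' (pert ε y), hrep' (pert (-ε) y), hrep' y, Finset.mul_sum,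
      ← Finset.sum_add_distrib, ← Finset.sum_sub_distrib]
  have hA0 : ∑ S ∈ Finset.univ.powerset, (-1:ℝ)^S.card * Φ (xS S) = 0 := by
    rw [Finset.sum_congr rfl (fun S _ => by rw [hΦG (xS S), Finset.mul_sum] :
      ∀ S ∈ Finset.univ.powerset, (-1:ℝ)^S.card * Φ (xS S) = ∑ j,
        (-1:ℝ)^S.card * (G j (pert ε (xS S)) + G j (pert (-ε) (xS S)) - 2 * G j (xS S)))]
    rw [Finset.sum_comm]
    exact Finset.sum_eq_zero (fun j _ => hinner j)
  rw [hA0] at hAε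
  linarith

/-! ### Part 1: membership in ReLU(k) -/

lemma isAffineMap_lin {n m : ℕ} (W : Fin m → Fin n → ℝ) (bv : Fin m → ℝ) :
    IsAffineMap (fun x (r : Fin m) => (∑ t, W r t * x t) + bv r) := by
  refine ⟨Matrix.of W, bv, fun x => ?_⟩
  funext r
  simp [Matrix.mulVec, dotProduct]

lemma relu_append {m1 m2 : ℕ} (u : Fin m1 → ℝ) (v : Fin m2 → ℝ) :
    relu (Fin.append u v) = Fin.append (relu u) (relu v) := by
  funext i
  refine Fin.addCases (fun i1 => ?_) (fun i2 => ?_) i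
  · rw [Fin.append_left]
    simp [relu, Fin.append_left]
  · rw [Fin.append_right]
    simp [relu, Fin.append_right]

lemma stack_pair : ∀ (k : ℕ) {n m1 m2 : ℕ}
    {g1 : (Fin n → ℝ) → (Fin m1 → ℝ)} {g2 : (Fin n → ℝ) → (Fin m2 → ℝ)},
    IsStack (k+1) n m1 g1 → IsStack (k+1) n m2 g2 →
    IsStack (k+1) n (m1 + m2) (fun x => Fin.append (g1 x) (g2 x)) := by
  intro k
  induction k with
  | zero =>
      intro n m1 m2 g1 g2 h1 h2
      cases h1 with
      | step T1 hT1 hh1 =>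
        cases h2 with
        | step T2 hT2 hh2 =>
          cases hh1
          cases hh2
          obtain ⟨A1, b1, hA1⟩ := hT1
          obtain ⟨A2, b2, hA2⟩ := hT2
          have hT' : IsAffineMap (fun x => Fin.append (T1 x) (T2 x)) := by
            refine ⟨Matrix.of (fun r t =>
              Fin.addCases (fun r1 => A1 r1 t) (fun r2 => A2 r2 t) r),
              Fin.append b1 b2, fun x => ?_⟩
            funext r
            refine Fin.addCases (fun r1 => ?_) (fun r2 => ?_) r
            · simp [Fin.append_left, Matrix.mulVec, dotProduct, Matrix.of_apply,
                Fin.addCases_left, hA1]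
            · simp [Fin.append_right, Matrix.mulVec, dotProduct, Matrix.of_apply,
                Fin.addCases_right, hA2]
          have hstep := IsStack.step (T := fun x => Fin.append (T1 x) (T2 x)) hT' (IsStack.base n)
          have heq : (relu ∘ (fun x => Fin.append (T1 x) (T2 x)) ∘ id)
              = (fun x => Fin.append ((relu ∘ T1 ∘ id) x) ((relu ∘ T2 ∘ id) x)) := by
            funext x
            exact relu_append (T1 x) (T2 x)
          rw [heq] at hstep
          exact hstep
  | succ k ih =>
      intro n m1 m2 g1 g2 h1 h2
      cases h1 with
      | step T1 hT1 hh1 =>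
        cases h2 with
        | step T2 hT2 hh2 =>
          rename_i m1' hfun1 m2' hfun2
          obtain ⟨A1, b1, hA1⟩ := hT1
          obtain ⟨A2, b2, hA2⟩ := hT2
          set T' : (Fin (m1' + m2') → ℝ) → Fin (m1 + m2) → ℝ :=
            fun y => Fin.append (T1 (fun i => y (Fin.castAdd m2' i)))
              (T2 (fun i => y (Fin.natAdd m1' i))) with hT'def
          have hT' : IsAffineMap T' := by
            refine ⟨Matrix.of (fun r t =>
              Fin.addCases (fun r1 => Fin.addCases (fun t1 => A1 r1 t1) (fun _ => (0:ℝ)) t)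
                (fun r2 => Fin.addCases (fun _ => (0:ℝ)) (fun t2 => A2 r2 t2) t) r),
              Fin.append b1 b2, fun y => ?_⟩
            funext r
            refine Fin.addCases (fun r1 => ?_) (fun r2 => ?_) r
            · simp only [hT'def, Fin.append_left, Pi.add_apply, hA1, Matrix.mulVec,
                dotProduct, Matrix.of_apply]
              rw [Fin.sum_univ_add]
              simp [Fin.addCases_left, Fin.addCases_right]
            · simp only [hT'def, Fin.append_right, Pi.add_apply, hA2, Matrix.mulVec,
                dotProduct, Matrix.of_apply]
              rw [Fin.sum_univ_add]
              simp [Fin.addCases_left, Fin.addCases_right]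
          have hpair := ih hh1 hh2
          have hstep := IsStack.step (T := T') hT' hpair
          have heq : (relu ∘ T' ∘ (fun x => Fin.append (hfun1 x) (hfun2 x)))
              = (fun x => Fin.append ((relu ∘ T1 ∘ hfun1) x) ((relu ∘ T2 ∘ hfun2) x)) := by
            funext x
            have hleft : (fun i => Fin.append (hfun1 x) (hfun2 x) (Fin.castAdd m2' i))
                = hfun1 x := funext fun i => Fin.append_left _ _ i
            have hright : (fun i => Fin.append (hfun1 x) (hfun2 x) (Fin.natAdd m1' i))
                = hfun2 x := funext fun i => Fin.append_right _ _ i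
            show relu (T' (Fin.append (hfun1 x) (hfun2 x)))
              = Fin.append (relu (T1 (hfun1 x))) (relu (T2 (hfun2 x)))
            rw [hT'def]
            simp only [hleft, hright]
            exact relu_append _ _
          rw [heq] at hstep
          exact hstep

lemma max_relu_comb (p q : ℝ) : max 0 (p - q) + max 0 q - max 0 (-q) = max p q := by
  have h1 : max 0 q - max 0 (-q) = q := by
    rcases le_total 0 q with h | h
    · rw [max_eq_right h, max_eq_left (by linarith)]; ring
    · rw [max_eq_left h, max_eq_right (by linarith)]; ring
  have h2 : max 0 (p - q) + q = max p q := by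
    rcases le_total p q with h | h
    · rw [max_eq_left (by linarith), max_eq_right h]; ring
    · rw [max_eq_right (by linarith), max_eq_left h]; ring
  linarith

lemma InReLU_max {n j : ℕ} {F G : (Fin n → ℝ) → ℝ} (hF : InReLU n (j+1) F)
    (hG : InReLU n (j+1) G) : InReLU n (j+1+1) (fun x => max (F x) (G x)) := by
  obtain ⟨m1, g1, c, hs1, hc1⟩ := hF
  obtain ⟨m2, g2, d, hs2, hc2⟩ := hG
  have hpair := stack_pair j hs1 hs2
  set cc : Fin (m1+m2) → ℝ := Fin.append c (fun _ => 0) with hcc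
  set dd : Fin (m1+m2) → ℝ := Fin.append (fun _ => 0) d with hdd
  set W : Fin 3 → Fin (m1+m2) → ℝ := ![fun t => cc t - dd t, dd, fun t => -dd t] with hW
  set T : (Fin (m1+m2) → ℝ) → Fin 3 → ℝ := fun y r => (∑ t, W r t * y t) + (fun _ => (0:ℝ)) r
    with hT
  refine ⟨3, relu ∘ T ∘ (fun x => Fin.append (g1 x) (g2 x)), ![1,1,-1],
    IsStack.step T (isAffineMap_lin W (fun _ => 0)) hpair, ?_⟩
  intro x
  have hccsum : (∑ t, cc t * (Fin.append (g1 x) (g2 x)) t) = F x := by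
    rw [Fin.sum_univ_add]
    simp only [hcc, Fin.append_left, Fin.append_right, zero_mul, Finset.sum_const_zero, add_zero]
    exact (hc1 x).symm
  have hddsum : (∑ t, dd t * (Fin.append (g1 x) (g2 x)) t) = G x := by
    rw [Fin.sum_univ_add]
    simp only [hdd, Fin.append_left, Fin.append_right, zero_mul, Finset.sum_const_zero, zero_add]
    exact (hc2 x).symm
  have hT0 : T (Fin.append (g1 x) (g2 x)) 0 = F x - G x := by
    rw [hT]
    simp only [hW]
    rw [show (∑ t, (![fun t => cc t - dd t, dd, fun t => -dd t] : Fin 3 → Fin (m1+m2) → ℝ) 0 t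
        * (Fin.append (g1 x) (g2 x)) t)
      = (∑ t, (cc t * (Fin.append (g1 x) (g2 x)) t - dd t * (Fin.append (g1 x) (g2 x)) t)) from
      Finset.sum_congr rfl (fun t _ => by simp [Matrix.cons_val_zero]; ring)]
    rw [Finset.sum_sub_distrib, hccsum, hddsum]
    simp
  have hT1 : T (Fin.append (g1 x) (g2 x)) 1 = G x := by
    rw [hT]
    simp only [hW]
    rw [show (∑ t, (![fun t => cc t - dd t, dd, fun t => -dd t] : Fin 3 → Fin (m1+m2) → ℝ) 1 t
        * (Fin.append (g1 x) (g2 x)) t)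
      = (∑ t, dd t * (Fin.append (g1 x) (g2 x)) t) from
      Finset.sum_congr rfl (fun t _ => by simp [Matrix.cons_val_one, Matrix.head_cons])]
    rw [hddsum]
    simp
  have hT2 : T (Fin.append (g1 x) (g2 x)) 2 = -(G x) := by
    rw [hT]
    simp only [hW]
    rw [show (∑ t, (![fun t => cc t - dd t, dd, fun t => -dd t] : Fin 3 → Fin (m1+m2) → ℝ) 2 t
        * (Fin.append (g1 x) (g2 x)) t)
      = (∑ t, -(dd t * (Fin.append (g1 x) (g2 x)) t)) from
      Finset.sum_congr rfl (fun t _ => by change (-dd t) * Fin.append (g1 x) (g2 x) t = _; ring)]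
    rw [Finset.sum_neg_distrib, hddsum]
    simp
  rw [Fin.sum_univ_three]
  simp only [Function.comp_apply, relu]
  rw [hT0, hT1, hT2]
  simp only [Matrix.cons_val_zero, Matrix.cons_val_one, Matrix.head_cons]
  rw [show ((![1,1,-1] : Fin 3 → ℝ) 2) = -1 from rfl]
  rw [show (1:ℝ) * max 0 (F x - G x) + 1 * max 0 (G x) + -1 * max 0 (-G x)
    = max 0 (F x - G x) + max 0 (G x) - max 0 (-(G x)) from by ring]
  exact (max_relu_comb (F x) (G x)).symm

lemma InReLU_one_layer {n m : ℕ} (W : Fin m → Fin n → ℝ) (bv cv : Fin m → ℝ)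
    (F : (Fin n → ℝ) → ℝ)
    (hFval : ∀ x, F x = ∑ r, cv r * max 0 ((∑ t, W r t * x t) + bv r)) : InReLU n 1 F := by
  refine ⟨m, relu ∘ (fun x (r : Fin m) => (∑ t, W r t * x t) + bv r) ∘ id, cv,
    IsStack.step _ (isAffineMap_lin W bv) (IsStack.base n), fun x => ?_⟩
  rw [hFval x]
  exact Finset.sum_congr rfl (fun r _ => rfl)

lemma sum_ind {n : ℕ} (i : Fin n) (x : Fin n → ℝ) :
    (∑ t, (if t = i then (1:ℝ) else 0) * x t) = x i := by simp

lemma InReLU_atom_maxlin {n : ℕ} (u v : Fin n → ℝ) :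
    InReLU n 1 (fun x => max (∑ t, u t * x t) (∑ t, v t * x t)) := by
  apply InReLU_one_layer (![fun t => u t - v t, v, fun t => -v t]) (fun _ => 0) ![1,1,-1]
  intro x
  rw [Fin.sum_univ_three]
  have e0 : (∑ t, (![fun t => u t - v t, v, fun t => -v t] : Fin 3 → Fin n → ℝ) 0 t * x t)
      = (∑ t, u t * x t) - (∑ t, v t * x t) := by
    rw [← Finset.sum_sub_distrib]
    exact Finset.sum_congr rfl (fun t _ => by norm_num; ring)
  have e1 : (∑ t, (![fun t => u t - v t, v, fun t => -v t] : Fin 3 → Fin n → ℝ) 1 t * x t)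
      = (∑ t, v t * x t) := by
    exact Finset.sum_congr rfl (fun t _ => by norm_num)
  have e2 : (∑ t, (![fun t => u t - v t, v, fun t => -v t] : Fin 3 → Fin n → ℝ) 2 t * x t)
      = -(∑ t, v t * x t) := by
    rw [← Finset.sum_neg_distrib]
    exact Finset.sum_congr rfl (fun t _ => by change (-v t) * x t = _; ring)
  rw [e0, e1, e2]
  simp only [Matrix.cons_val_zero, Matrix.cons_val_one, Matrix.head_cons, add_zero]
  rw [show ((![1,1,-1] : Fin 3 → ℝ) 2) = -1 from rfl]
  rw [show (1:ℝ) * max 0 ((∑ t, u t * x t) - (∑ t, v t * x t)) + 1 * max 0 (∑ t, v t * x t)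
    + -1 * max 0 (-(∑ t, v t * x t))
    = max 0 ((∑ t, u t * x t) - (∑ t, v t * x t)) + max 0 (∑ t, v t * x t)
      - max 0 (-(∑ t, v t * x t)) from by ring]
  exact (max_relu_comb _ _).symm

lemma InReLU_atom_B {n : ℕ} (i1 i2 i3 : Fin n) :
    InReLU n 1 (fun x => max (x i1) (x i2) + max 0 (x i3)) := by
  set e : Fin n → Fin n → ℝ := fun i t => if t = i then 1 else 0 with he
  apply InReLU_one_layer (![fun t => e i1 t - e i2 t, e i2, fun t => -e i2 t, e i3])
    (fun _ => 0) ![1,1,-1,1]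
  intro x
  rw [Fin.sum_univ_four]
  have e0 : (∑ t, (![fun t => e i1 t - e i2 t, e i2, fun t => -e i2 t, e i3]
        : Fin 4 → Fin n → ℝ) 0 t * x t) = x i1 - x i2 := by
    rw [show (∑ t, (![fun t => e i1 t - e i2 t, e i2, fun t => -e i2 t, e i3]
        : Fin 4 → Fin n → ℝ) 0 t * x t) = ∑ t, (e i1 t * x t - e i2 t * x t) from
      Finset.sum_congr rfl (fun t _ => by norm_num; ring)]
    rw [Finset.sum_sub_distrib, he]
    simp only
    rw [sum_ind i1 x, sum_ind i2 x]
  have e1 : (∑ t, (![fun t => e i1 t - e i2 t, e i2, fun t => -e i2 t, e i3]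
        : Fin 4 → Fin n → ℝ) 1 t * x t) = x i2 := by
    rw [show (∑ t, (![fun t => e i1 t - e i2 t, e i2, fun t => -e i2 t, e i3]
        : Fin 4 → Fin n → ℝ) 1 t * x t) = ∑ t, (e i2 t * x t) from
      Finset.sum_congr rfl (fun t _ => by norm_num)]
    rw [he]; exact sum_ind i2 x
  have e2 : (∑ t, (![fun t => e i1 t - e i2 t, e i2, fun t => -e i2 t, e i3]
        : Fin 4 → Fin n → ℝ) 2 t * x t) = -(x i2) := by
    rw [show (∑ t, (![fun t => e i1 t - e i2 t, e i2, fun t => -e i2 t, e i3]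
        : Fin 4 → Fin n → ℝ) 2 t * x t) = ∑ t, -(e i2 t * x t) from
      Finset.sum_congr rfl (fun t _ => by change (-e i2 t) * x t = _; ring)]
    rw [Finset.sum_neg_distrib, he]
    simp only
    rw [sum_ind i2 x]
  have e3 : (∑ t, (![fun t => e i1 t - e i2 t, e i2, fun t => -e i2 t, e i3]
        : Fin 4 → Fin n → ℝ) 3 t * x t) = x i3 := by
    rw [show (∑ t, (![fun t => e i1 t - e i2 t, e i2, fun t => -e i2 t, e i3]
        : Fin 4 → Fin n → ℝ) 3 t * x t) = ∑ t, (e i3 t * x t) from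
      Finset.sum_congr rfl (fun t _ => by rfl)]
    rw [he]; exact sum_ind i3 x
  rw [e0, e1, e2, e3]
  simp only [Matrix.cons_val_zero, Matrix.cons_val_one, Matrix.head_cons, add_zero]
  rw [show ((![1,1,-1,1] : Fin 4 → ℝ) 2) = -1 from rfl,
    show ((![1,1,-1,1] : Fin 4 → ℝ) 3) = 1 from rfl]
  have := max_relu_comb (x i1) (x i2)
  have h3 : max 0 (x i3) = max 0 (x i3) := rfl
  rw [show (1:ℝ) * max 0 (x i1 - x i2) + 1 * max 0 (x i2) + -1 * max 0 (-x i2) + 1 * max 0 (x i3)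
    = (max 0 (x i1 - x i2) + max 0 (x i2) - max 0 (-x i2)) + max 0 (x i3) from by ring]
  rw [max_relu_comb (x i1) (x i2)]

lemma range_pow_ne (m : ℕ) : (Finset.range (2^m)).Nonempty :=
  ⟨0, Finset.mem_range.mpr (Nat.two_pow_pos m)⟩

lemma maxpow {n : ℕ} : ∀ (m j : ℕ) (F : ℕ → (Fin n → ℝ) → ℝ),
    (∀ i, InReLU n (j+1) (F i)) →
    InReLU n (j+1+m) (fun x => (Finset.range (2^m)).sup' (range_pow_ne m) (fun i => F i x)) := by
  intro m
  induction m with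
  | zero =>
      intro j F hF
      have hval : ∀ x, (Finset.range (2^0)).sup' (range_pow_ne 0) (fun i => F i x) = F 0 x := by
        intro x
        apply le_antisymm
        · apply Finset.sup'_le
          intro i hi
          have : i = 0 := by
            have := Finset.mem_range.mp hi
            omega
          rw [this]
        · exact Finset.le_sup' (fun i => F i x) (Finset.mem_range.mpr (Nat.two_pow_pos 0))
      obtain ⟨mm, g, c, hs, hc⟩ := hF 0
      exact ⟨mm, g, c, hs, fun x => (hval x).trans (hc x)⟩
  | succ m ih =>
      intro j F hF
      set G : ℕ → (Fin n → ℝ) → ℝ := fun i x => max (F (2*i) x) (F (2*i+1) x) with hG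
      have hGre : ∀ i, InReLU n (j+1+1) (G i) := fun i => InReLU_max (hF _) (hF _)
      have hpow := ih (j+1) G hGre
      rw [show j+1+1+m = j+1+(m+1) from by omega] at hpow
      obtain ⟨mm, g, c, hs, hc⟩ := hpow
      refine ⟨mm, g, c, hs, fun x => ?_⟩
      rw [← hc x]
      have hps : (2:ℕ)^(m+1) = 2^m * 2 := pow_succ 2 m
      apply le_antisymm
      · apply Finset.sup'_le
        intro i hi
        have hi' : i < 2^(m+1) := Finset.mem_range.mp hi
        have h2 : i/2 < 2^m := by omega
        have hle : F i x ≤ G (i/2) x := by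
          have hcase : i = 2*(i/2) ∨ i = 2*(i/2)+1 := by omega
          rcases hcase with h | h
          · rw [hG]
            simp only
            rw [← h]
            exact le_max_left _ _
          · rw [hG]
            simp only
            rw [← h]
            exact le_max_right _ _
        exact le_trans hle (Finset.le_sup' (fun i => G i x) (Finset.mem_range.mpr h2))
      · apply Finset.sup'_le
        intro i hi
        have hi' : i < 2^m := Finset.mem_range.mp hi
        rw [hG]
        simp only
        apply max_le
        · exact Finset.le_sup' (fun i => F i x) (Finset.mem_range.mpr (by omega : 2*i < 2^(m+1)))
        · exact Finset.le_sup' (fun i => F i x)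
            (Finset.mem_range.mpr (by omega : 2*i+1 < 2^(m+1)))

lemma inReLU_f (k n : ℕ) (hk : 2 ≤ k) (hn : n = 2 ^ k)
    (f : (Fin n → ℝ) → ℝ)
    (hf : ∀ x, f x =
      max 0 (max
        (finMaxOn (Finset.univ.filter (fun i : Fin n => (i : ℕ) < n - 3)) (fun i => x i))
        (max (x ⟨n - 3, Nat.sub_lt (hn ▸ Nat.two_pow_pos k) (by norm_num)⟩)
             (x ⟨n - 2, Nat.sub_lt (hn ▸ Nat.two_pow_pos k) (by norm_num)⟩)
          + max 0 (x ⟨n - 1, Nat.sub_lt (hn ▸ Nat.two_pow_pos k) (by norm_num)⟩)))) :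
    InReLU n k f := by
  classical
  have hn4 : 4 ≤ n := by
    have h1 : 2^2 ≤ 2^k := Nat.pow_le_pow_right (by norm_num) hk
    omega
  have hpow : 2^(k-1) * 2 = n := by
    rw [hn, ← pow_succ]
    congr 1
    omega
  have hhalf2 : 2 ≤ 2^(k-1) := by
    have : 2^1 ≤ 2^(k-1) := Nat.pow_le_pow_right (by norm_num) (by omega)
    omega
  -- leaf vectors
  set lv : ℕ → Fin n → ℝ :=
    fun jj t => if 0 < jj ∧ jj ≤ n - 3 ∧ (t : ℕ) = jj - 1 then 1 else 0 with hlv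
  set L : ℕ → (Fin n → ℝ) → ℝ := fun jj x => ∑ t, lv jj t * x t with hL
  have hLpos : ∀ jj (h1 : 1 ≤ jj) (h2 : jj ≤ n - 3) (x : Fin n → ℝ),
      L jj x = x ⟨jj - 1, by omega⟩ := by
    intro jj h1 h2 x
    rw [hL]
    simp only [hlv]
    have hterm : ∀ t : Fin n, (if 0 < jj ∧ jj ≤ n - 3 ∧ (t:ℕ) = jj - 1 then (1:ℝ) else 0) * x t
        = (if t = (⟨jj - 1, by omega⟩ : Fin n) then (1:ℝ) else 0) * x t := by
      intro t
      congr 1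
      apply if_congr _ rfl rfl
      rw [Fin.ext_iff]
      constructor
      · rintro ⟨_, _, h⟩; exact h
      · intro h; exact ⟨by omega, by omega, h⟩
    rw [Finset.sum_congr rfl (fun t _ => hterm t)]
    exact sum_ind _ x
  have hLzero : ∀ jj, (jj = 0 ∨ n - 3 < jj) → ∀ x, L jj x = 0 := by
    intro jj hjj x
    rw [hL]
    simp only [hlv]
    apply Finset.sum_eq_zero
    intro t _
    rw [if_neg (by omega), zero_mul]
  -- the 2^{k-1} depth-1 pieces
  set Bf : (Fin n → ℝ) → ℝ := fun x =>
    max (x ⟨n - 3, by omega⟩) (x ⟨n - 2, by omega⟩) + max 0 (x ⟨n - 1, by omega⟩) with hBf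
  set Hfun : ℕ → (Fin n → ℝ) → ℝ := fun i =>
    if i = 0 then Bf else fun x => max (L (2*(i-1)) x) (L (2*(i-1)+1) x) with hHfun
  have hH0f : Hfun 0 = Bf := by simp [hHfun]
  have hHsf : ∀ i, Hfun (i+1) = fun x => max (L (2*i) x) (L (2*i+1) x) := by
    intro i
    simp [hHfun]
  have hH1 : ∀ i, InReLU n 1 (Hfun i) := by
    intro i
    cases i with
    | zero =>
        rw [hH0f, hBf]
        exact InReLU_atom_B _ _ _
    | succ i =>
        rw [hHsf i]
        simp only [hL]
        exact InReLU_atom_maxlin (lv (2*i)) (lv (2*i+1))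
  have hmain := maxpow (k-1) 0 Hfun hH1
  rw [show 0+1+(k-1) = k from by omega] at hmain
  obtain ⟨mm, g, c, hs, hc⟩ := hmain
  refine ⟨mm, g, c, hs, fun x => ?_⟩
  rw [← hc x]
  -- it remains to show f x = sup over the pieces
  rw [hf x]
  simp only
  set S := Finset.range (2^(k-1)) with hS
  have h0mem : (0:ℕ) ∈ S := Finset.mem_range.mpr (by omega)
  have h1mem : (1:ℕ) ∈ S := Finset.mem_range.mpr (by omega)
  have hH0 : ∀ y, Hfun 0 y = Bf y := fun y => by rw [hH0f]
  have hHsucc : ∀ i y, Hfun (i+1) y = max (L (2*i) y) (L (2*i+1) y) := fun i y => by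
    rw [hHsf i]
  have hznn : (0:ℝ) ≤ S.sup' (range_pow_ne (k-1)) (fun i => Hfun i x) := by
    refine le_trans ?_ (Finset.le_sup' (fun i => Hfun i x) h1mem)
    rw [hHsucc 0 x]
    rw [show 2*0 = 0 from rfl, hLzero 0 (Or.inl rfl) x]
    exact le_max_left _ _
  apply le_antisymm
  · apply max_le hznn
    apply max_le
    · -- finMaxOn ≤ sup'
      apply finMaxOn_le hznn
      intro i hi
      have hival : (i:ℕ) < n - 3 := by
        simp only [Finset.mem_filter] at hi
        exact hi.2
      set jj : ℕ := (i:ℕ) + 1 with hjj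
      have hj1 : 1 ≤ jj := by omega
      have hj2 : jj ≤ n - 3 := by omega
      have hLeq : L jj x = x i := by
        rw [hLpos jj hj1 hj2 x]
        congr 1
      have hmem2 : jj/2 + 1 ∈ S := Finset.mem_range.mpr (by omega)
      refine le_trans ?_ (Finset.le_sup' (fun i => Hfun i x) hmem2)
      rw [hHsucc (jj/2) x]
      rw [← hLeq]
      have hcase : jj = 2*(jj/2) ∨ jj = 2*(jj/2)+1 := by omega
      rcases hcase with h | h
      · rw [show L jj x = L (2*(jj/2)) x from by rw [← h]]
        exact le_max_left _ _
      · rw [show L jj x = L (2*(jj/2)+1) x from by rw [← h]]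
        exact le_max_right _ _
    · -- B ≤ sup'
      refine le_trans ?_ (Finset.le_sup' (fun i => Hfun i x) h0mem)
      rw [hH0 x]
  · apply Finset.sup'_le
    intro i hi
    cases i with
    | zero =>
        rw [hH0 x, hBf]
        exact le_trans (le_max_right _ _) (le_max_right _ _)
    | succ i =>
        rw [hHsucc i x]
        have hLle : ∀ jj, L jj x ≤ max 0 (max
            (finMaxOn (Finset.univ.filter (fun i : Fin n => (i : ℕ) < n - 3)) (fun i => x i))
            (max (x ⟨n - 3, by omega⟩) (x ⟨n - 2, by omega⟩)
              + max 0 (x ⟨n - 1, by omega⟩))) := by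
          intro jj
          rcases Nat.eq_zero_or_pos jj with h0 | h0
          · rw [hLzero jj (Or.inl h0) x]
            exact le_max_left _ _
          rcases Nat.lt_or_ge (n-3) jj with hgt | hle
          · rw [hLzero jj (Or.inr hgt) x]
            exact le_max_left _ _
          · rw [hLpos jj h0 hle x]
            have hmemF : (⟨jj - 1, by omega⟩ : Fin n) ∈
                Finset.univ.filter (fun i : Fin n => (i : ℕ) < n - 3) := by
              simp
              omega
            exact le_trans (le_finMaxOn hmemF)
              (le_trans (le_max_left _ _) (le_max_right _ _))
        exact max_le (hLle _) (hLle _)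

/-- for every `k ≥ 2` and `n = 2^k`, the function
`f(x) = max{0, x₁, …, x_{n−3}, max{x_{n−2}, x_{n−1}} + max{0, xₙ}}` lies in
`ReLU_n(k) ∖ MAX_n(2^k)`; in particular `ReLU(k)` is a strict superset of `MAX(2^k)`.
(Coordinates are 0-indexed: `x_i` of the paper is `x ⟨i-1⟩`.) -/
theorem relu_strict_superset_max (k n : ℕ) (hk : 2 ≤ k) (hn : n = 2 ^ k)
    (f : (Fin n → ℝ) → ℝ)
    (hf : ∀ x, f x =
      max 0 (max
        (finMaxOn (Finset.univ.filter (fun i : Fin n => (i : ℕ) < n - 3)) (fun i => x i))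
        (max (x ⟨n - 3, by have := Nat.two_pow_pos k; omega⟩)
             (x ⟨n - 2, by have := Nat.two_pow_pos k; omega⟩)
          + max 0 (x ⟨n - 1, by have := Nat.two_pow_pos k; omega⟩)))) :
    InReLU n k f ∧ ¬ InMAX n (2 ^ k) f :=
  ⟨inReLU_f k n hk hn f hf, not_inMAX k n hk hn f hf⟩
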